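/- Let f : (X,x) → (Y,y) be a bi-Lipschitz homeomorphism between subanalytic germs (with respect to the inner metric). Then for every loop γ : S¹ → X ∖ {x} and every α > 0, γ is an α-fast loop in X if and only if f ∘ γ is an α-fast loop in Y. Consequently υ(X,x) = υ(Y,y). -/

import Mathlib

open Set Filter MeasureTheory
open scoped Topology

/-- A loop in `X ∖ {x}`. -/
def IsLoopIn {n : ℕ} (X : Set (EuclideanSpace ℝ (Fin n))) (x : EuclideanSpace ℝ (Fin n))
    (γ : Circle → EuclideanSpace ℝ (Fin n)) : Prop :=
  Continuous γ ∧ ∀ θ, γ θ ∈ X \ {x}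

/-- A loop `γ : S¹ → X ∖ {x}` is `α`-fast if it can be filled by a homotopy `H` from the
constant loop at `x`, staying in `X`, whose image has `r^{−a} 𝓗²(Im(H) ∩ B(x,r)) → 0`
for every `0 < a < α`. -/
def IsFastLoop {n : ℕ} (X : Set (EuclideanSpace ℝ (Fin n))) (x : EuclideanSpace ℝ (Fin n))
    (α : ℝ) (γ : Circle → EuclideanSpace ℝ (Fin n)) : Prop :=
  ∃ H : Circle → ℝ → EuclideanSpace ℝ (Fin n),
    ContinuousOn (Function.uncurry H) (univ ×ˢ Icc 0 1) ∧
    (∀ θ, ∀ s ∈ Icc (0:ℝ) 1, H θ s ∈ X) ∧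
    (∀ θ, H θ 0 = x) ∧ (∀ θ, H θ 1 = γ θ) ∧
    ∀ a : ℝ, 0 < a → a < α →
      Tendsto (fun r : ℝ =>
          μH[2] ({p | ∃ θ, ∃ s ∈ Icc (0:ℝ) 1, p = H θ s} ∩ Metric.closedBall x r) /
            ENNReal.ofReal (r ^ a))
        (𝓝[>] 0) (𝓝 0)

/-- `γ` is null-homotopic inside `X ∖ {x}`. -/
def IsNullHomotopicIn {n : ℕ} (X : Set (EuclideanSpace ℝ (Fin n)))
    (x : EuclideanSpace ℝ (Fin n)) (γ : Circle → EuclideanSpace ℝ (Fin n)) : Prop :=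
  ∃ H : Circle → ℝ → EuclideanSpace ℝ (Fin n),
    ContinuousOn (Function.uncurry H) (univ ×ˢ Icc 0 1) ∧
    (∀ θ, ∀ s ∈ Icc (0:ℝ) 1, H θ s ∈ X \ {x}) ∧
    (∃ c, ∀ θ, H θ 0 = c) ∧ (∀ θ, H θ 1 = γ θ)

/-- `c` is distinguished for `(X,x)`: every `α`-fast loop with `α > c` is null-homotopic
in `X ∖ {x}`. -/
def Distinguished {n : ℕ} (X : Set (EuclideanSpace ℝ (Fin n)))
    (x : EuclideanSpace ℝ (Fin n)) (c : ℝ) : Prop :=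
  0 < c ∧ ∀ α : ℝ, c < α → ∀ γ, IsLoopIn X x γ → IsFastLoop X x α γ →
    IsNullHomotopicIn X x γ

/-- The invariant `υ(X,x)`: the infimum of distinguished constants. -/
noncomputable def upsilon {n : ℕ} (X : Set (EuclideanSpace ℝ (Fin n)))
    (x : EuclideanSpace ℝ (Fin n)) : ℝ :=
  sInf {c | Distinguished X x c}

/-- Pushing a fast loop forward along a bi-Lipschitz map. -/
lemma fast_push {n m : ℕ} {X : Set (EuclideanSpace ℝ (Fin n))}
    {Y : Set (EuclideanSpace ℝ (Fin m))} {f : EuclideanSpace ℝ (Fin n) → EuclideanSpace ℝ (Fin m)}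
    (hmaps : Set.MapsTo f X Y) (hfc : ContinuousOn f X)
    {L : ℝ} (hL : 0 < L)
    (hfLip : ∀ a ∈ X, ∀ b ∈ X, dist (f a) (f b) ≤ L * dist a b)
    (hfinvLip : ∀ a ∈ X, ∀ b ∈ X, dist a b ≤ L * dist (f a) (f b))
    {x : EuclideanSpace ℝ (Fin n)} {y : EuclideanSpace ℝ (Fin m)} (hfx : f x = y)
    {α : ℝ} {γ : Circle → EuclideanSpace ℝ (Fin n)}
    (h : IsFastLoop X x α γ) : IsFastLoop Y y α (f ∘ γ) := by
  obtain ⟨H, Hcont, Hmem, H0, H1, Hfast⟩ := h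
  have hxX : x ∈ X := by
    have := Hmem 1 0 ⟨le_refl 0, zero_le_one⟩
    rwa [H0] at this
  refine ⟨fun θ s => f (H θ s), ?_, ?_, ?_, ?_, ?_⟩
  · have : Function.uncurry (fun θ s => f (H θ s)) = f ∘ Function.uncurry H := rfl
    rw [this]
    exact hfc.comp Hcont fun p hp => Hmem p.1 p.2 hp.2
  · exact fun θ s hs => hmaps (Hmem θ s hs)
  · intro θ; show f (H θ 0) = y; rw [H0, hfx]
  · intro θ; show f (H θ 1) = (f ∘ γ) θ; rw [H1]; rfl
  · intro a ha haα
    set S : Set (EuclideanSpace ℝ (Fin n)) := {p | ∃ θ, ∃ s ∈ Icc (0:ℝ) 1, p = H θ s} with hS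
    have hSX : S ⊆ X := by rintro p ⟨θ, s, hs, rfl⟩; exact Hmem θ s hs
    have hSet : {p | ∃ θ, ∃ s ∈ Icc (0:ℝ) 1, p = f (H θ s)} = f '' S := by
      ext p
      constructor
      · rintro ⟨θ, s, hs, rfl⟩; exact ⟨H θ s, ⟨θ, s, hs, rfl⟩, rfl⟩
      · rintro ⟨q, ⟨θ, s, hs, rfl⟩, rfl⟩; exact ⟨θ, s, hs, rfl⟩
    set K : NNReal := ⟨L, hL.le⟩ with hK
    have hKL : (K : ℝ) = L := rfl
    have hLip : LipschitzOnWith K f X := by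
      rw [lipschitzOnWith_iff_dist_le_mul]
      intro p hp q hq; rw [hKL]; exact hfLip p hp q hq
    set D : ENNReal := (K : ENNReal) ^ (2:ℝ) * ENNReal.ofReal (L ^ a) with hD
    have hDne : D ≠ ⊤ :=
      ENNReal.mul_ne_top (ENNReal.rpow_ne_top_of_nonneg (by norm_num) ENNReal.coe_ne_top)
        ENNReal.ofReal_ne_top
    -- the original quotient, composed with r ↦ L * r, tends to 0
    have hmul : Tendsto (fun r : ℝ => L * r) (𝓝[>] 0) (𝓝[>] 0) := by
      apply tendsto_nhdsWithin_of_tendsto_nhds_of_eventually_within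
      · have : Tendsto (fun r : ℝ => L * r) (𝓝 0) (𝓝 (L * 0)) :=
          (continuous_const.mul continuous_id).tendsto 0
        simpa using this.mono_left nhdsWithin_le_nhds
      · filter_upwards [self_mem_nhdsWithin] with r hr
        exact mul_pos hL hr
    have hcomp : Tendsto
        (fun r : ℝ => D * (μH[2] (S ∩ Metric.closedBall x (L * r)) /
          ENNReal.ofReal ((L * r) ^ a))) (𝓝[>] 0) (𝓝 0) := by
      have h0 := (Hfast a ha haα).comp hmul
      have := ENNReal.Tendsto.const_mul (a := D) h0 (Or.inr hDne)
      simpa using this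
    refine tendsto_of_tendsto_of_tendsto_of_le_of_le' tendsto_const_nhds hcomp
      (Eventually.of_forall fun r => zero_le) ?_
    filter_upwards [self_mem_nhdsWithin] with r hr
    have hr0 : (0:ℝ) < r := hr
    -- inclusion
    have hsub : {p | ∃ θ, ∃ s ∈ Icc (0:ℝ) 1, p = f (H θ s)} ∩ Metric.closedBall y r ⊆
        f '' (S ∩ Metric.closedBall x (L * r)) := by
      rw [hSet]
      rintro p ⟨⟨q, hqS, rfl⟩, hpb⟩
      refine ⟨q, ⟨hqS, ?_⟩, rfl⟩
      rw [Metric.mem_closedBall] at hpb ⊢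
      calc dist q x ≤ L * dist (f q) (f x) := hfinvLip q (hSX hqS) x hxX
        _ = L * dist (f q) y := by rw [hfx]
        _ ≤ L * r := mul_le_mul_of_nonneg_left hpb hL.le
    have hmeas : μH[2] ({p | ∃ θ, ∃ s ∈ Icc (0:ℝ) 1, p = f (H θ s)} ∩ Metric.closedBall y r) ≤
        (K : ENNReal) ^ (2:ℝ) * μH[2] (S ∩ Metric.closedBall x (L * r)) := by
      refine le_trans (measure_mono hsub) ?_
      exact (hLip.mono (fun p hp => hSX hp.1)).hausdorffMeasure_image_le (by norm_num)
    -- divide both sides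
    have hdiv : μH[2] ({p | ∃ θ, ∃ s ∈ Icc (0:ℝ) 1, p = f (H θ s)} ∩ Metric.closedBall y r) /
        ENNReal.ofReal (r ^ a) ≤
        (K : ENNReal) ^ (2:ℝ) * μH[2] (S ∩ Metric.closedBall x (L * r)) /
          ENNReal.ofReal (r ^ a) :=
      ENNReal.div_le_div_right hmeas _
    refine hdiv.trans (le_of_eq ?_)
    have hLa : ENNReal.ofReal ((L * r) ^ a) =
        ENNReal.ofReal (L ^ a) * ENNReal.ofReal (r ^ a) := by
      rw [Real.mul_rpow hL.le hr0.le, ENNReal.ofReal_mul (Real.rpow_nonneg hL.le a)]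
    set b := ENNReal.ofReal (L ^ a) with hb
    set c := ENNReal.ofReal (r ^ a) with hc
    set μ := μH[2] (S ∩ Metric.closedBall x (L * r)) with hμ
    have hb0 : b ≠ 0 := by
      simp [hb, ENNReal.ofReal_eq_zero, not_le, Real.rpow_pos_of_pos hL a]
    have hbt : b ≠ ⊤ := ENNReal.ofReal_ne_top
    rw [hD, hLa]
    calc (K : ENNReal) ^ (2:ℝ) * μ / c
        = (K : ENNReal) ^ (2:ℝ) * (μ / c) := mul_div_assoc _ _ _
      _ = (K : ENNReal) ^ (2:ℝ) * (b * μ / (b * c)) := by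
          rw [ENNReal.mul_div_mul_left μ c hb0 hbt]
      _ = (K : ENNReal) ^ (2:ℝ) * b * (μ / (b * c)) := by
          rw [mul_div_assoc, mul_assoc]

/-- Pushing a loop forward. -/
lemma loop_push {n m : ℕ} {X : Set (EuclideanSpace ℝ (Fin n))}
    {Y : Set (EuclideanSpace ℝ (Fin m))} {f : EuclideanSpace ℝ (Fin n) → EuclideanSpace ℝ (Fin m)}
    {x : EuclideanSpace ℝ (Fin n)} {y : EuclideanSpace ℝ (Fin m)}
    (hmapsD : Set.MapsTo f (X \ {x}) (Y \ {y})) (hfc : ContinuousOn f X)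
    {γ : Circle → EuclideanSpace ℝ (Fin n)} (h : IsLoopIn X x γ) : IsLoopIn Y y (f ∘ γ) :=
  ⟨hfc.comp_continuous h.1 fun θ => (h.2 θ).1, fun θ => hmapsD (h.2 θ)⟩

/-- Pushing a null-homotopy forward. -/
lemma null_push {n m : ℕ} {X : Set (EuclideanSpace ℝ (Fin n))}
    {Y : Set (EuclideanSpace ℝ (Fin m))} {f : EuclideanSpace ℝ (Fin n) → EuclideanSpace ℝ (Fin m)}
    {x : EuclideanSpace ℝ (Fin n)} {y : EuclideanSpace ℝ (Fin m)}
    (hmapsD : Set.MapsTo f (X \ {x}) (Y \ {y})) (hfc : ContinuousOn f X)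
    {γ : Circle → EuclideanSpace ℝ (Fin n)} (h : IsNullHomotopicIn X x γ) :
    IsNullHomotopicIn Y y (f ∘ γ) := by
  obtain ⟨H, Hcont, Hmem, ⟨c, Hc⟩, H1⟩ := h
  refine ⟨fun θ s => f (H θ s), ?_, fun θ s hs => hmapsD (Hmem θ s hs), ⟨f c, fun θ => by show f (H θ 0) = f c; rw [Hc]⟩,
    fun θ => by show f (H θ 1) = (f ∘ γ) θ; rw [H1]; rfl⟩
  have : Function.uncurry (fun θ s => f (H θ s)) = f ∘ Function.uncurry H := rfl
  rw [this]
  exact hfc.comp Hcont fun p hp => (Hmem p.1 p.2 hp.2).1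

/-- Proposition on invariance: for a bi-Lipschitz homeomorphism
`f : (X,x) → (Y,y)` (Lipschitz in both directions for the Euclidean metrics, as follows
from an inner-metric bi-Lipschitz map via the pancake decomposition), a loop `γ` is
`α`-fast in `X` iff `f ∘ γ` is `α`-fast in `Y`; consequently `υ(X,x) = υ(Y,y)`. -/
theorem upsilon_biLipschitz_invariant {n m : ℕ}
    (X : Set (EuclideanSpace ℝ (Fin n))) (Y : Set (EuclideanSpace ℝ (Fin m)))
    (f : EuclideanSpace ℝ (Fin n) → EuclideanSpace ℝ (Fin m))
    (hbij : Set.BijOn f X Y) (hfc : ContinuousOn f X)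
    (g : EuclideanSpace ℝ (Fin m) → EuclideanSpace ℝ (Fin n))
    (hg : Set.InvOn g f X Y) (hgc : ContinuousOn g Y)
    (L : ℝ) (hL : 0 < L)
    (hfLip : ∀ a ∈ X, ∀ b ∈ X, dist (f a) (f b) ≤ L * dist a b)
    (hfinvLip : ∀ a ∈ X, ∀ b ∈ X, dist a b ≤ L * dist (f a) (f b))
    (x : EuclideanSpace ℝ (Fin n)) (y : EuclideanSpace ℝ (Fin m))
    (hx : x ∈ X) (hfx : f x = y) :
    (∀ α > (0:ℝ), ∀ γ, IsLoopIn X x γ →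
      (IsFastLoop X x α γ ↔ IsFastLoop Y y α (f ∘ γ))) ∧
    upsilon X x = upsilon Y y := by
  have hfmaps : Set.MapsTo f X Y := hbij.mapsTo
  have hgmaps : Set.MapsTo g Y X := by
    intro q hq
    obtain ⟨p, hp, rfl⟩ := hbij.surjOn hq
    rw [hg.1 hp]; exact hp
  have hgy : g y = x := by rw [← hfx, hg.1 hx]
  have hgLip : ∀ a ∈ Y, ∀ b ∈ Y, dist (g a) (g b) ≤ L * dist a b := by
    intro a ha b hb
    obtain ⟨a', ha', rfl⟩ := hbij.surjOn ha
    obtain ⟨b', hb', rfl⟩ := hbij.surjOn hb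
    rw [hg.1 ha', hg.1 hb']
    exact hfinvLip a' ha' b' hb'
  have hginvLip : ∀ a ∈ Y, ∀ b ∈ Y, dist a b ≤ L * dist (g a) (g b) := by
    intro a ha b hb
    obtain ⟨a', ha', rfl⟩ := hbij.surjOn ha
    obtain ⟨b', hb', rfl⟩ := hbij.surjOn hb
    rw [hg.1 ha', hg.1 hb']
    exact hfLip a' ha' b' hb'
  have hfmapsD : Set.MapsTo f (X \ {x}) (Y \ {y}) := by
    rintro p ⟨hp, hpx⟩
    refine ⟨hfmaps hp, fun hpy => hpx ?_⟩
    simp only [mem_singleton_iff] at hpy ⊢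
    rw [← hg.1 hp, hpy, ← hfx, hg.1 hx]
  have hgmapsD : Set.MapsTo g (Y \ {y}) (X \ {x}) := by
    rintro q ⟨hq, hqy⟩
    refine ⟨hgmaps hq, fun hqx => hqy ?_⟩
    simp only [mem_singleton_iff] at hqx ⊢
    rw [← hg.2 hq, hqx, hfx]
  -- the iff
  have hiff : ∀ α > (0:ℝ), ∀ γ, IsLoopIn X x γ →
      (IsFastLoop X x α γ ↔ IsFastLoop Y y α (f ∘ γ)) := by
    intro α _ γ hγ
    constructor
    · exact fast_push hfmaps hfc hL hfLip hfinvLip hfx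
    · intro h
      have := fast_push hgmaps hgc hL hgLip hginvLip hgy h
      have hgfγ : g ∘ (f ∘ γ) = γ := funext fun θ => hg.1 (hγ.2 θ).1
      rwa [hgfγ] at this
  refine ⟨hiff, ?_⟩
  -- distinguished sets coincide
  have hset : {c | Distinguished X x c} = {c | Distinguished Y y c} := by
    ext c
    simp only [mem_setOf_eq]
    constructor
    · rintro ⟨hc0, hc⟩
      refine ⟨hc0, fun α hα γ hγY hfastY => ?_⟩
      have hγX : IsLoopIn X x (g ∘ γ) := loop_push hgmapsD hgc hγY
      have hfastX : IsFastLoop X x α (g ∘ γ) :=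
        fast_push hgmaps hgc hL hgLip hginvLip hgy hfastY
      have hnull := hc α hα (g ∘ γ) hγX hfastX
      have := null_push hfmapsD hfc hnull
      have hfgγ : f ∘ (g ∘ γ) = γ := funext fun θ => hg.2 (hγY.2 θ).1
      rwa [hfgγ] at this
    · rintro ⟨hc0, hc⟩
      refine ⟨hc0, fun α hα γ hγX hfastX => ?_⟩
      have hγY : IsLoopIn Y y (f ∘ γ) := loop_push hfmapsD hfc hγX
      have hfastY : IsFastLoop Y y α (f ∘ γ) :=
        fast_push hfmaps hfc hL hfLip hfinvLip hfx hfastX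
      have hnull := hc α hα (f ∘ γ) hγY hfastY
      have := null_push hgmapsD hgc hnull
      have hgfγ : g ∘ (f ∘ γ) = γ := funext fun θ => hg.1 (hγX.2 θ).1
      rwa [hgfγ] at this
  rw [upsilon, upsilon, hset]
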